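/- Let α > 0, β₁, β₂ be real numbers and σ > 0. The quartic polynomial λ²(λ − 1)² + (αλ − β₁)(αλ − β₂)σ² is Schur stable if and only if all of the following hold: |β₁β₂|σ² < 1, (α − β₁)(α − β₂) > 0, 4 + (α + β₁)(α + β₂)σ² > 0, and α²(β₁²σ² + 1)(β₂²σ² + 1) < (β₁β₂σ² + 1)(2α(β₁ + β₂) + β₁β₂(β₁β₂σ² − 3)). (This polynomial is the characteristic polynomial of generalized Jacobi optimistic gradient descent on a bilinear game, per singular value σ; hence Jacobi OGD converges linearly iff these conditions hold for all singular values σ of E.) -/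

import Mathlib

open Polynomial

lemma aeval_quad {g : ℝ[X]} (hm : g.Monic) (h2 : g.natDegree = 2) (z : ℂ) :
    aeval z g = z ^ 2 + (g.coeff 1 : ℂ) * z + (g.coeff 0 : ℂ) := by
  have h := aeval_eq_sum_range (x := z) (p := g)
  rw [h2] at h
  have hlc : g.coeff 2 = 1 := by
    have := hm.coeff_natDegree; rwa [h2] at this
  rw [h]
  simp [Finset.sum_range_succ, hlc, Algebra.smul_def]
  ring

lemma monic_split {f g : ℝ[X]} (hf : f.Monic) (hg : g.Monic) (hdvd : g ∣ f) :
    ∃ h : ℝ[X], f = g * h ∧ h.Monic ∧ g.natDegree + h.natDegree = f.natDegree := by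
  obtain ⟨h, hfh⟩ := hdvd
  have hh : h.Monic := hg.of_mul_monic_left (hfh ▸ hf)
  exact ⟨h, hfh, hh, by rw [hfh, hg.natDegree_mul hh]⟩

lemma exists_root_aeval {f : ℝ[X]} (hf : f.Monic) (hd : 0 < f.natDegree) :
    ∃ z : ℂ, aeval z f = 0 := by
  have hdeg : 0 < (f.map (algebraMap ℝ ℂ)).degree := by
    rwa [degree_map_eq_of_injective (algebraMap ℝ ℂ).injective, ← natDegree_pos_iff_degree_pos]
  obtain ⟨z, hz⟩ := Complex.exists_root hdeg
  exact ⟨z, by rwa [aeval_def, ← eval_map]⟩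

lemma aeval_ofReal'' (g : ℝ[X]) (x : ℝ) : aeval (x : ℂ) g = ((g.eval x : ℝ) : ℂ) := by
  simpa using aeval_algebraMap_apply_eq_algebraMap_eval (A := ℂ) x g

lemma exists_quad_factor (a b c d : ℝ) :
    ∃ p q r s : ℝ, ∀ z : ℂ,
      z ^ 4 + (a : ℂ) * z ^ 3 + (b : ℂ) * z ^ 2 + (c : ℂ) * z + (d : ℂ)
        = (z ^ 2 + (p : ℂ) * z + (q : ℂ)) * (z ^ 2 + (r : ℂ) * z + (s : ℂ)) := by
  have hfm : (X ^ 4 + C a * X ^ 3 + C b * X ^ 2 + C c * X + C d : ℝ[X]).Monic := by monicity!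
  have hf4 : (X ^ 4 + C a * X ^ 3 + C b * X ^ 2 + C c * X + C d : ℝ[X]).natDegree = 4 := by
    compute_degree!
  set f : ℝ[X] := X ^ 4 + C a * X ^ 3 + C b * X ^ 2 + C c * X + C d with hfdef
  have hfeval : ∀ w : ℂ, aeval w f
      = w ^ 4 + (a : ℂ) * w ^ 3 + (b : ℂ) * w ^ 2 + (c : ℂ) * w + (d : ℂ) := by
    intro w; simp [hfdef]
  obtain ⟨z, hz⟩ := exists_root_aeval hfm (by omega)
  by_cases him : z.im = 0
  · -- z is real
    have hx : ((z.re : ℝ) : ℂ) = z := by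
      apply Complex.ext <;> simp [him]
    have hre : f.eval z.re = 0 := by
      have h2 : ((f.eval z.re : ℝ) : ℂ) = 0 := by
        rw [← aeval_ofReal'', hx]; exact hz
      exact_mod_cast h2
    have hdvd : (X - C z.re) ∣ f := dvd_iff_isRoot.mpr hre
    obtain ⟨f1, hf1, hf1m, hdeg1⟩ := monic_split hfm (monic_X_sub_C z.re) hdvd
    have hf13 : f1.natDegree = 3 := by
      have := natDegree_X_sub_C (R := ℝ) z.re
      omega
    obtain ⟨w, hw⟩ := exists_root_aeval hf1m (by omega)
    by_cases hwim : w.im = 0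
    · have hwx : ((w.re : ℝ) : ℂ) = w := by
        apply Complex.ext <;> simp [hwim]
      have hwre : f1.eval w.re = 0 := by
        have h2 : ((f1.eval w.re : ℝ) : ℂ) = 0 := by
          rw [← aeval_ofReal'', hwx]; exact hw
        exact_mod_cast h2
      have hdvd2 : (X - C w.re) ∣ f1 := dvd_iff_isRoot.mpr hwre
      obtain ⟨f2, hf2, hf2m, hdeg2⟩ := monic_split hf1m (monic_X_sub_C w.re) hdvd2
      have hf22 : f2.natDegree = 2 := by
        have := natDegree_X_sub_C (R := ℝ) w.re
        omega
      refine ⟨-(z.re + w.re), z.re * w.re, f2.coeff 1, f2.coeff 0, fun u => ?_⟩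
      have hu := congrArg (aeval u) hf1
      rw [hf2, map_mul, map_mul, aeval_quad hf2m hf22] at hu
      rw [← hfeval u, hu]
      simp only [map_sub, map_add, map_mul, map_pow, aeval_X, aeval_C, Complex.coe_algebraMap]
      push_cast
      ring
    · -- w nonreal: quadratic factor of f1
      have hdvd2 : X ^ 2 - C (2 * w.re) * X + C (‖w‖ ^ 2) ∣ f1 :=
        f1.quadratic_dvd_of_aeval_eq_zero_im_ne_zero hw hwim
      have hqm : (X ^ 2 - C (2 * w.re) * X + C (‖w‖ ^ 2) : ℝ[X]).Monic := by monicity!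
      have hqd : (X ^ 2 - C (2 * w.re) * X + C (‖w‖ ^ 2) : ℝ[X]).natDegree = 2 := by
        compute_degree!
      obtain ⟨l, hl, hlm, hdegl⟩ := monic_split hf1m hqm hdvd2
      have hl1 : l.natDegree = 1 := by omega
      have hlX : l = X + C (l.coeff 0) := hlm.eq_X_add_C hl1
      refine ⟨l.coeff 0 - z.re, -(z.re * l.coeff 0), -(2 * w.re), ‖w‖ ^ 2, fun u => ?_⟩
      have hu := congrArg (aeval u) hf1
      rw [hl, hlX] at hu
      rw [← hfeval u, hu]
      simp only [map_sub, map_add, map_mul, map_pow, aeval_X, aeval_C, Complex.coe_algebraMap]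
      push_cast
      ring
  · -- z nonreal: quadratic factor of f
    have hdvd : X ^ 2 - C (2 * z.re) * X + C (‖z‖ ^ 2) ∣ f :=
      f.quadratic_dvd_of_aeval_eq_zero_im_ne_zero hz him
    have hqm : (X ^ 2 - C (2 * z.re) * X + C (‖z‖ ^ 2) : ℝ[X]).Monic := by monicity!
    have hqd : (X ^ 2 - C (2 * z.re) * X + C (‖z‖ ^ 2) : ℝ[X]).natDegree = 2 := by
      compute_degree!
    obtain ⟨h, hfh, hhm, hdegh⟩ := monic_split hfm hqm hdvd
    have hh2 : h.natDegree = 2 := by omega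
    refine ⟨-(2 * z.re), ‖z‖ ^ 2, h.coeff 1, h.coeff 0, fun u => ?_⟩
    have hu := congrArg (aeval u) hfh
    rw [map_mul, aeval_quad hhm hh2] at hu
    rw [← hfeval u, hu]
    simp only [map_sub, map_add, map_mul, map_pow, aeval_X, aeval_C, Complex.coe_algebraMap]
    push_cast
    ring


-- reversed quadratic positive on (-1,1)
lemma revquad_pos {r s : ℝ} (hr : |r| < 1 + s) (hs : |s| < 1) {x : ℝ}
    (hx1 : -1 < x) (hx2 : x < 1) : 0 < 1 + r * x + s * x ^ 2 := by
  obtain ⟨hr1, hr2⟩ := abs_lt.mp hr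
  obtain ⟨hs1, hs2⟩ := abs_lt.mp hs
  have hs2' : s ^ 2 < 1 := by nlinarith
  have hx2' : x ^ 2 < 1 := by nlinarith
  have hsx1 : -1 < s * x := by nlinarith [sq_nonneg (s + x)]
  have hsx2 : s * x < 1 := by nlinarith [sq_nonneg (s - x)]
  rcases le_or_gt 0 x with hx | hx
  · nlinarith [mul_pos (show (0:ℝ) < 1 - x by linarith) (show (0:ℝ) < 1 - s * x by linarith),
      mul_nonneg hx (show (0:ℝ) ≤ r + 1 + s by linarith)]
  · nlinarith [mul_pos (show (0:ℝ) < 1 + x by linarith) (show (0:ℝ) < 1 + s * x by linarith),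
      mul_pos (show (0:ℝ) < -x by linarith) (show (0:ℝ) < 1 + s - r by linarith)]

lemma real_roots_bounds {a b : ℝ} (hb : |b| < 1) (ha : |a| < 1 + b)
    (hd : 0 ≤ a ^ 2 - 4 * b) :
    -1 < (-a - Real.sqrt (a ^ 2 - 4 * b)) / 2 ∧ (-a + Real.sqrt (a ^ 2 - 4 * b)) / 2 < 1 := by
  obtain ⟨hb1, hb2⟩ := abs_lt.mp hb
  obtain ⟨ha1, ha2⟩ := abs_lt.mp ha
  have ht0 : 0 ≤ Real.sqrt (a ^ 2 - 4 * b) := Real.sqrt_nonneg _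
  have ht2 : Real.sqrt (a ^ 2 - 4 * b) ^ 2 = a ^ 2 - 4 * b := Real.sq_sqrt hd
  constructor
  · have h1 : Real.sqrt (a ^ 2 - 4 * b) < 2 - a := by nlinarith
    linarith
  · have h1 : Real.sqrt (a ^ 2 - 4 * b) < 2 + a := by nlinarith
    linarith

lemma quad_stable_iff (a b : ℝ) :
    (∀ z : ℂ, z ^ 2 + (a : ℂ) * z + (b : ℂ) = 0 → ‖z‖ < 1) ↔
      |b| < 1 ∧ |a| < 1 + b := by
  constructor
  · intro h
    rcases le_or_gt 0 (a ^ 2 - 4 * b) with hd | hd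
    · set t := Real.sqrt (a ^ 2 - 4 * b) with htdef
      have ht0 : 0 ≤ t := Real.sqrt_nonneg _
      have ht2 : t ^ 2 = a ^ 2 - 4 * b := Real.sq_sqrt hd
      have ht2c : (t : ℂ) ^ 2 = (a : ℂ) ^ 2 - 4 * (b : ℂ) := by exact_mod_cast ht2
      set x1 : ℝ := (-a + t) / 2 with hx1def
      set x2 : ℝ := (-a - t) / 2 with hx2def
      have hroot1 : ((x1 : ℂ)) ^ 2 + (a : ℂ) * (x1 : ℂ) + (b : ℂ) = 0 := by
        rw [hx1def]; push_cast; linear_combination (1 / 4 : ℂ) * ht2c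
      have hroot2 : ((x2 : ℂ)) ^ 2 + (a : ℂ) * (x2 : ℂ) + (b : ℂ) = 0 := by
        rw [hx2def]; push_cast; linear_combination (1 / 4 : ℂ) * ht2c
      have h1 : |x1| < 1 := by
        have := h _ hroot1; rwa [Complex.norm_real, Real.norm_eq_abs] at this
      have h2 : |x2| < 1 := by
        have := h _ hroot2; rwa [Complex.norm_real, Real.norm_eq_abs] at this
      obtain ⟨h1a, h1b⟩ := abs_lt.mp h1
      obtain ⟨h2a, h2b⟩ := abs_lt.mp h2
      have hprod : x1 * x2 = b := by
        rw [hx1def, hx2def]; nlinarith [ht2]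
      have hsum : x1 + x2 = -a := by rw [hx1def, hx2def]; ring
      constructor
      · rw [abs_lt]; constructor <;> nlinarith
      · rw [abs_lt]; constructor <;> nlinarith
    · set t := Real.sqrt (4 * b - a ^ 2) with htdef
      have ht0 : 0 ≤ t := Real.sqrt_nonneg _
      have ht2 : t ^ 2 = 4 * b - a ^ 2 := Real.sq_sqrt (by linarith)
      have ht2c : (t : ℂ) ^ 2 = 4 * (b : ℂ) - (a : ℂ) ^ 2 := by exact_mod_cast ht2
      set z0 : ℂ := (↑(-a / 2) : ℂ) + (↑(t / 2) : ℂ) * Complex.I with hz0def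
      have hroot : z0 ^ 2 + (a : ℂ) * z0 + (b : ℂ) = 0 := by
        rw [hz0def]; push_cast
        linear_combination (-1 / 4 : ℂ) * ht2c + ((t : ℂ) ^ 2 / 4) * Complex.I_sq
      have habs := h _ hroot
      have hnsq : ‖z0‖ ^ 2 = b := by
        rw [Complex.sq_norm, hz0def]
        simp [Complex.normSq_apply]
        nlinarith [ht2]
      have hb0 : 0 ≤ b := by rw [← hnsq]; positivity
      have hblt : b < 1 := by
        rw [← hnsq]; nlinarith [norm_nonneg z0]
      constructor
      · rw [abs_lt]; constructor <;> linarith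
      · rw [abs_lt]; constructor <;> nlinarith
  · rintro ⟨hb, ha⟩ z hz
    rcases le_or_gt 0 (a ^ 2 - 4 * b) with hd | hd
    · set t := Real.sqrt (a ^ 2 - 4 * b) with htdef
      have ht0 : 0 ≤ t := Real.sqrt_nonneg _
      have ht2 : t ^ 2 = a ^ 2 - 4 * b := Real.sq_sqrt hd
      have ht2c : (t : ℂ) ^ 2 = (a : ℂ) ^ 2 - 4 * (b : ℂ) := by exact_mod_cast ht2
      obtain ⟨hlow, hhigh⟩ := real_roots_bounds hb ha hd
      have hfac : (z - ((-a + t) / 2 : ℝ)) * (z - ((-a - t) / 2 : ℝ)) = 0 := by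
        rw [← hz]; push_cast; linear_combination (-1 / 4 : ℂ) * ht2c
      rcases mul_eq_zero.mp hfac with h0 | h0
      · have : z = ((-a + t) / 2 : ℝ) := by linear_combination h0
        rw [this, Complex.norm_real, Real.norm_eq_abs, abs_lt]
        constructor
        · have : (-a - t) / 2 ≤ (-a + t) / 2 := by linarith
          linarith
        · exact hhigh
      · have : z = ((-a - t) / 2 : ℝ) := by linear_combination h0
        rw [this, Complex.norm_real, Real.norm_eq_abs, abs_lt]
        constructor
        · exact hlow
        · have : (-a - t) / 2 ≤ (-a + t) / 2 := by linarith
          linarith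
    · set t := Real.sqrt (4 * b - a ^ 2) with htdef
      have ht0 : 0 ≤ t := Real.sqrt_nonneg _
      have ht2 : t ^ 2 = 4 * b - a ^ 2 := Real.sq_sqrt (by linarith)
      have ht2c : (t : ℂ) ^ 2 = 4 * (b : ℂ) - (a : ℂ) ^ 2 := by exact_mod_cast ht2
      set z0 : ℂ := (↑(-a / 2) : ℂ) + (↑(t / 2) : ℂ) * Complex.I with hz0def
      have hfac : (z - z0) * (z - (starRingEnd ℂ) z0) = 0 := by
        rw [← hz, hz0def]
        rw [map_add, Complex.conj_ofReal, map_mul, Complex.conj_ofReal, Complex.conj_I]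
        push_cast
        linear_combination ((1 : ℂ) / 4) * ht2c - ((t : ℂ) ^ 2 / 4) * Complex.I_sq
      have habs0 : ‖z0‖ < 1 := by
        have hnsq : ‖z0‖ ^ 2 = b := by
          rw [Complex.sq_norm, hz0def]
          simp [Complex.normSq_apply]
          nlinarith [ht2]
        nlinarith [norm_nonneg z0, hnsq, abs_lt.mp hb]
      rcases mul_eq_zero.mp hfac with h0 | h0
      · have : z = z0 := by linear_combination h0
        rwa [this]
      · have : z = (starRingEnd ℂ) z0 := by linear_combination h0
        rw [this, Complex.norm_conj]
        exact habs0


lemma revquad_pos' {r s : ℝ} (hr : |r| < 1 + s) (hs : |s| < 1) {x : ℝ}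
    (hx1 : -1 < x) (hx2 : x < 1) : 0 < 1 + r * x + s * x ^ 2 := by
  obtain ⟨hr1, hr2⟩ := abs_lt.mp hr
  obtain ⟨hs1, hs2⟩ := abs_lt.mp hs
  have hsx1 : -1 < s * x := by nlinarith [sq_nonneg (s + x)]
  have hsx2 : s * x < 1 := by nlinarith [sq_nonneg (s - x)]
  rcases le_or_gt 0 x with hx | hx
  · nlinarith [mul_pos (show (0:ℝ) < 1 - x by linarith) (show (0:ℝ) < 1 - s * x by linarith),
      mul_nonneg hx (show (0:ℝ) ≤ r + 1 + s by linarith)]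
  · nlinarith [mul_pos (show (0:ℝ) < 1 + x by linarith) (show (0:ℝ) < 1 + s * x by linarith),
      mul_pos (show (0:ℝ) < -x by linarith) (show (0:ℝ) < 1 + s - r by linarith)]

lemma roots_in_disk {a b : ℝ} (hb : |b| < 1) (ha : |a| < 1 + b) (hd : 0 ≤ a ^ 2 - 4 * b) :
    ∃ x1 x2 : ℝ, x1 + x2 = -a ∧ x1 * x2 = b ∧
      -1 < x1 ∧ x1 < 1 ∧ -1 < x2 ∧ x2 < 1 := by
  obtain ⟨hb1, hb2⟩ := abs_lt.mp hb
  obtain ⟨ha1, ha2⟩ := abs_lt.mp ha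
  have ht0 : 0 ≤ Real.sqrt (a ^ 2 - 4 * b) := Real.sqrt_nonneg _
  have ht2 : Real.sqrt (a ^ 2 - 4 * b) ^ 2 = a ^ 2 - 4 * b := Real.sq_sqrt hd
  set t := Real.sqrt (a ^ 2 - 4 * b)
  have h1 : t < 2 - a := by nlinarith
  have h2 : t < 2 + a := by nlinarith
  exact ⟨(-a + t) / 2, (-a - t) / 2, by ring, by linear_combination (-(1:ℝ)/4) * ht2,
    by linarith, by linarith, by linarith, by linarith⟩

lemma dirA {p q r s : ℝ} (hq : |q| < 1) (hs : |s| < 1) (hp : |p| < 1 + q) (hr : |r| < 1 + s) :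
    0 < (1 - q) * (1 - s) * ((1 - q * s) ^ 2 - (r - s * p) * (p - q * r)) := by
  have h1q : 0 < 1 - q := by linarith [(abs_lt.mp hq).2]
  have h1s : 0 < 1 - s := by linarith [(abs_lt.mp hs).2]
  have hK : 0 < (1 - q * s) ^ 2 - (r - s * p) * (p - q * r) := by
    rcases le_or_gt 0 (p ^ 2 - 4 * q) with hd | hd
    · obtain ⟨x1, x2, hsum, hprod, hx1a, hx1b, hx2a, hx2b⟩ := roots_in_disk hq hp hd
      have hp' : p = -(x1 + x2) := by linarith
      have hq' : q = x1 * x2 := hprod.symm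
      subst hp' hq'
      have f1 := revquad_pos' hr hs hx1a hx1b
      have f2 := revquad_pos' hr hs hx2a hx2b
      nlinarith [mul_pos f1 f2]
    · have hd' : 0 < 4 * q - p ^ 2 := by linarith
      by_contra hKn
      push_neg at hKn
      have hid : 4 * ((1 - q * s) ^ 2 - (r - s * p) * (p - q * r))
          = (s * (p ^ 2 - 2 * q) - r * p + 2) ^ 2 + (4 * q - p ^ 2) * (r - s * p) ^ 2 := by
        ring
      have h3 : (r - s * p) ^ 2 ≤ 0 := by
        nlinarith [sq_nonneg (s * (p ^ 2 - 2 * q) - r * p + 2), sq_nonneg (r - s * p)]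
      have hT2 : r - s * p = 0 :=
        pow_eq_zero_iff two_ne_zero |>.mp (le_antisymm h3 (sq_nonneg _))
      have h5 : (s * (p ^ 2 - 2 * q) - r * p + 2) ^ 2 ≤ 0 := by
        nlinarith [sq_nonneg (r - s * p)]
      have hT1 : s * (p ^ 2 - 2 * q) - r * p + 2 = 0 :=
        pow_eq_zero_iff two_ne_zero |>.mp (le_antisymm h5 (sq_nonneg _))
      have hqs : q * s < 1 := by
        obtain ⟨hq1, hq2⟩ := abs_lt.mp hq
        obtain ⟨hs1, hs2⟩ := abs_lt.mp hs
        nlinarith [sq_nonneg (q + s), sq_nonneg (q - s)]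
      have : 2 - 2 * (q * s) = 0 := by linear_combination hT1 + p * hT2
      linarith
  exact mul_pos (mul_pos h1q h1s) hK

lemma xy_lt_one {x x' y y' : ℝ} (hx : 1 < x) (hx' : 1 < x') (hy : y < 1) (hy' : -1 < y')
    (hs : x + x' + y + y' = 2) : x * y < 1 := by
  rcases le_or_gt y 0 with h | h
  · nlinarith
  · nlinarith [sq_nonneg (x - 1)]

lemma roots_q_gt_one {p q : ℝ} (hq : 1 < q) (hu : 0 < 1 + p + q) (hm : 0 < 1 - p + q)
    (hd : 0 ≤ p ^ 2 - 4 * q) :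
    ∃ x1 x2 : ℝ, x1 + x2 = -p ∧ x1 * x2 = q ∧
      ((1 < x1 ∧ 1 < x2) ∨ (x1 < -1 ∧ x2 < -1)) := by
  have ht0 : 0 ≤ Real.sqrt (p ^ 2 - 4 * q) := Real.sqrt_nonneg _
  have ht2 : Real.sqrt (p ^ 2 - 4 * q) ^ 2 = p ^ 2 - 4 * q := Real.sq_sqrt hd
  set t := Real.sqrt (p ^ 2 - 4 * q) with htdef
  set x1 := (-p + t) / 2 with hx1
  set x2 := (-p - t) / 2 with hx2
  have hsum : x1 + x2 = -p := by rw [hx1, hx2]; ring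
  have hprod : x1 * x2 = q := by rw [hx1, hx2]; linear_combination (-(1:ℝ)/4) * ht2
  refine ⟨x1, x2, hsum, hprod, ?_⟩
  have hu2 : 0 < (1 - x1) * (1 - x2) := by
    have h : (1 - x1) * (1 - x2) = 1 + p + q := by linear_combination (-1 : ℝ) * hsum + hprod
    rw [h]; exact hu
  have hm2 : 0 < (1 + x1) * (1 + x2) := by
    have h : (1 + x1) * (1 + x2) = 1 - p + q := by linear_combination hsum + hprod
    rw [h]; exact hm
  have hord : x2 ≤ x1 := by rw [hx1, hx2]; linarith
  rcases lt_trichotomy x1 1 with h1 | h1 | h1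
  · right
    have h2 : x2 < 1 := by linarith
    have hx1n : x1 < -1 := by
      by_contra hc
      push_neg at hc
      have h3 : 0 < 1 + x1 := by
        rcases lt_or_eq_of_le hc with h | h
        · linarith
        · exfalso; rw [← h] at hm2; norm_num at hm2
      have h4 : 0 < 1 + x2 := by nlinarith
      nlinarith [sq_nonneg (x1 - x2)]
    exact ⟨hx1n, by linarith⟩
  · exfalso; rw [← h1] at hu2; norm_num at hu2
  · left
    have h2 : 1 < x2 := by nlinarith
    exact ⟨h1, h2⟩

lemma roots_split {p q : ℝ} (hu : 1 + p + q < 0) (hm : 0 < 1 - p + q) :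
    ∃ x1 x2 : ℝ, x1 + x2 = -p ∧ x1 * x2 = q ∧ 1 < x1 ∧ -1 < x2 ∧ x2 < 1 := by
  have hd : 0 ≤ p ^ 2 - 4 * q := by nlinarith [sq_nonneg (2 + p)]
  have ht0 : 0 ≤ Real.sqrt (p ^ 2 - 4 * q) := Real.sqrt_nonneg _
  have ht2 : Real.sqrt (p ^ 2 - 4 * q) ^ 2 = p ^ 2 - 4 * q := Real.sq_sqrt hd
  set t := Real.sqrt (p ^ 2 - 4 * q)
  have hgt : (2 + p) ^ 2 < t ^ 2 := by nlinarith
  have h1 : 2 + p < t := by nlinarith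
  have h2 : -(2 + p) < t := by nlinarith
  have h3 : t < 2 - p := by nlinarith
  exact ⟨(-p + t) / 2, (-p - t) / 2, by ring, by linear_combination (-(1:ℝ)/4) * ht2,
    by linarith, by linarith, by linarith⟩

lemma roots_case3 {p q : ℝ} (hu : 0 < 1 + p + q) (hm : 1 - p + q < 0) :
    ∃ x1 x2 : ℝ, x1 + x2 = -p ∧ x1 < 1 ∧ x2 < -1 := by
  have hd : 0 ≤ p ^ 2 - 4 * q := by nlinarith [sq_nonneg (2 - p)]
  have ht0 : 0 ≤ Real.sqrt (p ^ 2 - 4 * q) := Real.sqrt_nonneg _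
  have ht2 : Real.sqrt (p ^ 2 - 4 * q) ^ 2 = p ^ 2 - 4 * q := Real.sq_sqrt hd
  set t := Real.sqrt (p ^ 2 - 4 * q)
  have hgt : (2 - p) ^ 2 < t ^ 2 := by nlinarith
  have h1 : 2 - p < t := by nlinarith
  have h3 : t < 2 + p := by nlinarith
  exact ⟨(-p + t) / 2, (-p - t) / 2, by ring, by linarith, by linarith⟩

set_option maxHeartbeats 2000000 in
lemma caseI_qlt {p q r s : ℝ} (hsum : p + r = -2) (hqs : |q * s| < 1)
    (hu : 0 < 1 + p + q) (hm : 0 < 1 - p + q) (hv : 0 < 1 + r + s) (hn : 0 < 1 - r + s)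
    (hE : 0 < (1 - q) * (1 - s) * ((1 - q * s) ^ 2 - (r - s * p) * (p - q * r))) : q < 1 := by
  by_contra hq1
  push_neg at hq1
  obtain ⟨hqs1, hqs2⟩ := abs_lt.mp hqs
  have hs0 : -1 < s := by linarith
  have hq0 : -1 < q := by linarith
  have hs2 : s < 1 := by nlinarith
  have hq : 1 < q := by
    rcases lt_or_eq_of_le hq1 with h | h
    · exact h
    · exfalso; rw [← h] at hE; norm_num at hE
  have hK : (1 - q * s) ^ 2 - (r - s * p) * (p - q * r) < 0 := by
    by_contra hc
    push_neg at hc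
    have h1 : 0 ≤ (1 - s) * ((1 - q * s) ^ 2 - (r - s * p) * (p - q * r)) :=
      mul_nonneg (by linarith) hc
    nlinarith [mul_nonneg (show (0:ℝ) ≤ q - 1 by linarith) h1]
  have hrabs : |r| < 1 + s := abs_lt.mpr ⟨by linarith, by linarith⟩
  rcases le_or_gt 0 (p ^ 2 - 4 * q) with hd | hd
  · obtain ⟨x1, x2, hxs, hxp, hcase⟩ := roots_q_gt_one hq hu hm hd
    rcases hcase with ⟨hx1, hx2⟩ | ⟨hx1, hx2⟩
    · have hp' : p = -(x1 + x2) := by linarith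
      have hr' : r = x1 + x2 - 2 := by rw [hp'] at hsum; linarith
      have hq' : q = x1 * x2 := hxp.symm
      subst hp' hq' hr'
      rcases le_or_gt 0 ((x1 + x2 - 2) ^ 2 - 4 * s) with hdh | hdh
      · have hsabs : |s| < 1 := abs_lt.mpr ⟨hs0, hs2⟩
        obtain ⟨y1, y2, hys, hyp, hy1a, hy1b, hy2a, hy2b⟩ := roots_in_disk hsabs hrabs hdh
        have hs' : s = y1 * y2 := hyp.symm
        subst hs'
        have hsum4 : x1 + x2 + y1 + y2 = 2 := by linarith [hys]
        have g11 : x1 * y1 < 1 := xy_lt_one hx1 hx2 hy1b hy2a hsum4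
        have g12 : x1 * y2 < 1 := xy_lt_one hx1 hx2 hy2b hy1a (by linarith)
        have g21 : x2 * y1 < 1 := xy_lt_one hx2 hx1 hy1b hy2a (by linarith)
        have g22 : x2 * y2 < 1 := xy_lt_one hx2 hx1 hy2b hy1a (by linarith)
        have hid : (1 - x1 * x2 * (y1 * y2)) ^ 2
            - ((x1 + x2 - 2) - y1 * y2 * -(x1 + x2)) * (-(x1 + x2) - x1 * x2 * (x1 + x2 - 2))
            = (1 - x1 * y1) * (1 - x1 * y2) * ((1 - x2 * y1) * (1 - x2 * y2)) := by
          linear_combination (x1 + x2 - 2 * (x1 * x2) - x1 * x2 * y1 - x1 * x2 * y2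
            + x1 * x2 ^ 2 + x1 ^ 2 * x2 + x1 * x2 ^ 2 * (y1 * y2)
            + x1 ^ 2 * x2 * (y1 * y2)) * hys
        nlinarith [mul_pos (mul_pos (show (0:ℝ) < 1 - x1 * y1 by linarith)
            (show (0:ℝ) < 1 - x1 * y2 by linarith))
          (mul_pos (show (0:ℝ) < 1 - x2 * y1 by linarith)
            (show (0:ℝ) < 1 - x2 * y2 by linarith))]
      · have hspos : 0 < s := by nlinarith [sq_nonneg (x1 + x2 - 2)]
        have f1 : 0 < 1 + (x1 + x2 - 2) * x1 + s * x1 ^ 2 := by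
          nlinarith [sq_nonneg (2 * s * x1 + (x1 + x2 - 2))]
        have f2 : 0 < 1 + (x1 + x2 - 2) * x2 + s * x2 ^ 2 := by
          nlinarith [sq_nonneg (2 * s * x2 + (x1 + x2 - 2))]
        nlinarith [mul_pos f1 f2]
    · have hp2 : p > 2 := by linarith [hxs]
      have hr4 : r < -4 := by linarith
      linarith [(abs_lt.mp hrabs).1]
  · have hd' : 0 < 4 * q - p ^ 2 := by linarith
    have hid : 4 * ((1 - q * s) ^ 2 - (r - s * p) * (p - q * r))
        = (s * (p ^ 2 - 2 * q) - r * p + 2) ^ 2 + (4 * q - p ^ 2) * (r - s * p) ^ 2 := by ring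
    nlinarith [sq_nonneg (s * (p ^ 2 - 2 * q) - r * p + 2),
      mul_nonneg hd'.le (sq_nonneg (r - s * p))]

lemma caseII_pos {x1 x2 y1 y2 : ℝ} (hx1 : 1 < x1) (hx2a : -1 < x2) (hx2b : x2 < 1)
    (hy1 : 1 < y1) (hy2a : -1 < y2) (hy2b : y2 < 1) (hsum4 : x1 + x2 + y1 + y2 = 2) :
    0 < (1 - x1 * x2) * (1 - y1 * y2) * ((1 - x1 * y2) * ((1 - x2 * y1) * (1 - x2 * y2))) := by
  rcases le_or_gt x2 0 with h2 | h2 <;> rcases le_or_gt y2 0 with h3 | h3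
  · have f1 : 0 < 1 - x1 * x2 := by nlinarith
    have f2 : 0 < 1 - y1 * y2 := by nlinarith
    have f4 : 0 < 1 - x1 * y2 := by nlinarith
    have f5 : 0 < 1 - x2 * y1 := by nlinarith
    have f6 : 0 < 1 - x2 * y2 := by nlinarith
    exact mul_pos (mul_pos f1 f2) (mul_pos f4 (mul_pos f5 f6))
  · -- x2 ≤ 0, y2 > 0
    have f1 : 0 < 1 - x1 * x2 := by nlinarith
    have f2 : 0 < 1 - y1 * y2 := by nlinarith [sq_nonneg (y1 - 1)]
    have f4 : 0 < 1 - x1 * y2 := by nlinarith [sq_nonneg (x1 - 1)]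
    have f5 : 0 < 1 - x2 * y1 := by nlinarith
    have f6 : 0 < 1 - x2 * y2 := by nlinarith
    exact mul_pos (mul_pos f1 f2) (mul_pos f4 (mul_pos f5 f6))
  · -- x2 > 0, y2 ≤ 0
    have f1 : 0 < 1 - x1 * x2 := by nlinarith [sq_nonneg (x1 - 1)]
    have f2 : 0 < 1 - y1 * y2 := by nlinarith
    have f4 : 0 < 1 - x1 * y2 := by nlinarith
    have f5 : 0 < 1 - x2 * y1 := by nlinarith [sq_nonneg (y1 - 1)]
    have f6 : 0 < 1 - x2 * y2 := by nlinarith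
    exact mul_pos (mul_pos f1 f2) (mul_pos f4 (mul_pos f5 f6))
  · exfalso; linarith

set_option maxHeartbeats 1000000 in
lemma caseII_false {p q r s : ℝ} (hsum : p + r = -2) (hqs : |q * s| < 1)
    (hu : 1 + p + q < 0) (hm : 0 < 1 - p + q) (hv : 1 + r + s < 0) (hn : 0 < 1 - r + s)
    (hE : 0 < (1 - q) * (1 - s) * ((1 - q * s) ^ 2 - (r - s * p) * (p - q * r))) : False := by
  obtain ⟨x1, x2, hxs, hxp, hx1, hx2a, hx2b⟩ := roots_split hu hm
  obtain ⟨y1, y2, hys, hyp, hy1, hy2a, hy2b⟩ := roots_split hv hn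
  have hp' : p = -(x1 + x2) := by linarith
  have hr' : r = -(y1 + y2) := by linarith
  have hq' : q = x1 * x2 := hxp.symm
  have hs' : s = y1 * y2 := hyp.symm
  subst hp' hr' hq' hs'
  have hsum4 : x1 + x2 + y1 + y2 = 2 := by linarith
  have hpos := caseII_pos hx1 hx2a hx2b hy1 hy2a hy2b hsum4
  have hneg : 0 < x1 * y1 - 1 := by nlinarith
  have hE6 : 0 < (1 - x1 * y1) * ((1 - x1 * x2) * (1 - y1 * y2)
      * ((1 - x1 * y2) * ((1 - x2 * y1) * (1 - x2 * y2)))) := by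
    have h : (1 - x1 * x2) * (1 - y1 * y2)
        * ((1 - x1 * x2 * (y1 * y2)) ^ 2
          - (-(y1 + y2) - y1 * y2 * -(x1 + x2)) * (-(x1 + x2) - x1 * x2 * -(y1 + y2)))
        = (1 - x1 * y1) * ((1 - x1 * x2) * (1 - y1 * y2)
          * ((1 - x1 * y2) * ((1 - x2 * y1) * (1 - x2 * y2)))) := by ring
    rw [← h]; exact hE
  linarith [mul_pos hpos hneg]

lemma dirB {p q r s : ℝ} (hsum : p + r = -2) (hqs : |q * s| < 1)
    (h2 : 0 < (1 + p + q) * (1 + r + s)) (h3 : 0 < (1 - p + q) * (1 - r + s))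
    (hE : 0 < (1 - q) * (1 - s) * ((1 - q * s) ^ 2 - (r - s * p) * (p - q * r))) :
    |q| < 1 ∧ |s| < 1 ∧ |p| < 1 + q ∧ |r| < 1 + s := by
  have hEsym : 0 < (1 - s) * (1 - q) * ((1 - s * q) ^ 2 - (p - q * r) * (r - s * p)) := by
    have h : (1 - s) * (1 - q) * ((1 - s * q) ^ 2 - (p - q * r) * (r - s * p))
        = (1 - q) * (1 - s) * ((1 - q * s) ^ 2 - (r - s * p) * (p - q * r)) := by ring
    rw [h]; exact hE
  rcases mul_pos_iff.mp h2 with ⟨hu, hv⟩ | ⟨hu, hv⟩ <;>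
    rcases mul_pos_iff.mp h3 with ⟨hm, hn⟩ | ⟨hm, hn⟩
  · -- all positive
    have hq1 : q < 1 := caseI_qlt hsum hqs hu hm hv hn hE
    have hs1 : s < 1 := caseI_qlt (by linarith) (by rwa [mul_comm]) hv hn hu hm hEsym
    have hq0 : -1 < q := by linarith
    have hs0 : -1 < s := by linarith
    exact ⟨abs_lt.mpr ⟨hq0, hq1⟩, abs_lt.mpr ⟨hs0, hs1⟩,
      abs_lt.mpr ⟨by linarith, by linarith⟩, abs_lt.mpr ⟨by linarith, by linarith⟩⟩
  · -- u,v > 0, m,n < 0 : case III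
    exfalso
    obtain ⟨x1, x2, hxs, hx1, hx2⟩ := roots_case3 hu hm
    obtain ⟨y1, y2, hys, hy1, hy2⟩ := roots_case3 hv hn
    have : x1 + x2 + y1 + y2 = 2 := by linarith
    linarith
  · -- u,v < 0, m,n > 0 : case II
    exact absurd hE (by intro h; exact caseII_false hsum hqs hu hm hv hn h)
  · -- all negative : case IV
    exfalso
    have hqn : q < -1 := by linarith
    have hsn : s < -1 := by linarith
    nlinarith [(abs_lt.mp hqs).2]


set_option maxHeartbeats 1000000 in
/-- Jacobi optimistic gradient descent on a bilinear game: the characteristic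
polynomial `λ²(λ − 1)² + (αλ − β₁)(αλ − β₂)σ²` is Schur stable iff
`|β₁β₂|σ² < 1`, `(α − β₁)(α − β₂) > 0`, `4 + (α + β₁)(α + β₂)σ² > 0`, and
`α²(β₁²σ² + 1)(β₂²σ² + 1) < (β₁β₂σ² + 1)(2α(β₁ + β₂) + β₁β₂(β₁β₂σ² − 3))`. -/
theorem jacobi_ogd_schur (α β₁ β₂ σ : ℝ) (hα : 0 < α) (hσ : 0 < σ) :
    (∀ z : ℂ, z ^ 2 * (z - 1) ^ 2 +
          ((α : ℂ) * z - (β₁ : ℂ)) * ((α : ℂ) * z - (β₂ : ℂ)) * (σ : ℂ) ^ 2 = 0 →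
        ‖z‖ < 1) ↔
      (|β₁ * β₂| * σ ^ 2 < 1 ∧
        (α - β₁) * (α - β₂) > 0 ∧
        4 + (α + β₁) * (α + β₂) * σ ^ 2 > 0 ∧
        α ^ 2 * (β₁ ^ 2 * σ ^ 2 + 1) * (β₂ ^ 2 * σ ^ 2 + 1) <
          (β₁ * β₂ * σ ^ 2 + 1) *
            (2 * α * (β₁ + β₂) + β₁ * β₂ * (β₁ * β₂ * σ ^ 2 - 3))) := by
  have hσ2 : (0:ℝ) < σ ^ 2 := by positivity
  obtain ⟨p, q, r, s, hfact⟩ := exists_quad_factor (-2) (1 + α ^ 2 * σ ^ 2)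
    (-(α * (β₁ + β₂) * σ ^ 2)) (β₁ * β₂ * σ ^ 2)
  have hpoly : ∀ z : ℂ, z ^ 2 * (z - 1) ^ 2 +
      ((α : ℂ) * z - (β₁ : ℂ)) * ((α : ℂ) * z - (β₂ : ℂ)) * (σ : ℂ) ^ 2
      = (z ^ 2 + (p : ℂ) * z + (q : ℂ)) * (z ^ 2 + (r : ℂ) * z + (s : ℂ)) := by
    intro z
    have h := hfact z
    push_cast at h
    linear_combination h
  have h0r : β₁ * β₂ * σ ^ 2 = q * s := by
    have h := hfact 0
    apply Complex.ofReal_injective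
    push_cast at h ⊢
    linear_combination h
  have h1r : σ ^ 2 * ((α - β₁) * (α - β₂)) = (1 + p + q) * (1 + r + s) := by
    have h := hfact 1
    apply Complex.ofReal_injective
    push_cast at h ⊢
    linear_combination h
  have hm1r : 4 + (α + β₁) * (α + β₂) * σ ^ 2 = (1 - p + q) * (1 - r + s) := by
    have h := hfact (-1)
    apply Complex.ofReal_injective
    push_cast at h ⊢
    linear_combination h
  have h2r : 4 + 4 * α ^ 2 * σ ^ 2 - 2 * α * (β₁ + β₂) * σ ^ 2 + β₁ * β₂ * σ ^ 2
      = (4 + 2 * p + q) * (4 + 2 * r + s) := by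
    have h := hfact 2
    apply Complex.ofReal_injective
    push_cast at h ⊢
    linear_combination h
  have hsum : p + r = -2 := by
    linear_combination (1/2 : ℝ) * h1r + (1/6 : ℝ) * hm1r - (1/2 : ℝ) * h0r - (1/6 : ℝ) * h2r
  have hB : 1 + α ^ 2 * σ ^ 2 = q + s + p * r := by
    linear_combination (1/2 : ℝ) * h1r + (1/2 : ℝ) * hm1r - h0r
  have hC : -(α * (β₁ + β₂) * σ ^ 2) = p * s + q * r := by
    linear_combination h1r - (1/3 : ℝ) * hm1r - (1/6 : ℝ) * h2r - (1/2 : ℝ) * h0r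
  have hGE : ((β₁ * β₂ * σ ^ 2 + 1) *
        (2 * α * (β₁ + β₂) + β₁ * β₂ * (β₁ * β₂ * σ ^ 2 - 3))
      - α ^ 2 * (β₁ ^ 2 * σ ^ 2 + 1) * (β₂ ^ 2 * σ ^ 2 + 1)) * σ ^ 2
      = (1 - q) * (1 - s) * ((1 - q * s) ^ 2 - (r - s * p) * (p - q * r)) := by
    have hid2 : -(((1 + α ^ 2 * σ ^ 2) - 1) * ((β₁ * β₂ * σ ^ 2) - 1) ^ 2
        + (-(α * (β₁ + β₂) * σ ^ 2)) ^ 2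
        + ((β₁ * β₂ * σ ^ 2) + 1) * (2 * (-(α * (β₁ + β₂) * σ ^ 2))
            + 3 * (β₁ * β₂ * σ ^ 2) - (β₁ * β₂ * σ ^ 2) ^ 2))
        = (1 - q) * (1 - s) * ((1 - q * s) ^ 2 - (r - s * p) * (p - q * r)) := by
      rw [hB, hC, h0r]
      linear_combination (-2 * q * s - q * r + q * r * s - q ^ 2 * r * s - p * s
        + p * q * s - p * q * s ^ 2) * hsum
    linear_combination hid2
  have hstab_iff : (∀ z : ℂ, z ^ 2 * (z - 1) ^ 2 +
      ((α : ℂ) * z - (β₁ : ℂ)) * ((α : ℂ) * z - (β₂ : ℂ)) * (σ : ℂ) ^ 2 = 0 →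
        ‖z‖ < 1) ↔
      ((|q| < 1 ∧ |p| < 1 + q) ∧ (|s| < 1 ∧ |r| < 1 + s)) := by
    constructor
    · intro h
      constructor
      · refine (quad_stable_iff p q).mp fun z hz => h z ?_
        rw [hpoly z, hz, zero_mul]
      · refine (quad_stable_iff r s).mp fun z hz => h z ?_
        rw [hpoly z, hz, mul_zero]
    · rintro ⟨h1, h2⟩ z hz
      rw [hpoly z] at hz
      rcases mul_eq_zero.mp hz with h | h
      · exact (quad_stable_iff p q).mpr h1 z h
      · exact (quad_stable_iff r s).mpr h2 z h
  have habs : |β₁ * β₂| * σ ^ 2 = |q * s| := by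
    rw [← h0r, abs_mul (β₁ * β₂) (σ ^ 2), abs_of_pos hσ2]
  constructor
  · intro hstab
    obtain ⟨⟨hq, hp⟩, ⟨hs, hr⟩⟩ := hstab_iff.mp hstab
    have hu : 0 < 1 + p + q := by linarith [(abs_lt.mp hp).1, (abs_lt.mp hp).2]
    have hm : 0 < 1 - p + q := by linarith [(abs_lt.mp hp).2]
    have hv : 0 < 1 + r + s := by linarith [(abs_lt.mp hr).1]
    have hn : 0 < 1 - r + s := by linarith [(abs_lt.mp hr).2]
    refine ⟨?_, ?_, ?_, ?_⟩
    · rw [habs, abs_mul]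
      nlinarith [abs_nonneg q, abs_nonneg s]
    · have huv := mul_pos hu hv
      rw [← h1r] at huv
      by_contra hcon
      push_neg at hcon
      nlinarith [mul_nonneg hσ2.le (neg_nonneg.mpr hcon)]
    · rw [hm1r]
      exact mul_pos hm hn
    · have hE := dirA hq hs hp hr
      rw [← hGE] at hE
      nlinarith [hσ2]
  · rintro ⟨c1, c2, c3, c4⟩
    have hqs : |q * s| < 1 := by rw [← habs]; exact c1
    have huv : 0 < (1 + p + q) * (1 + r + s) := by
      rw [← h1r]; exact mul_pos hσ2 c2
    have hmn : 0 < (1 - p + q) * (1 - r + s) := by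
      rw [← hm1r]; exact c3
    have hE : 0 < (1 - q) * (1 - s) * ((1 - q * s) ^ 2 - (r - s * p) * (p - q * r)) := by
      rw [← hGE]
      have : 0 < (β₁ * β₂ * σ ^ 2 + 1) *
          (2 * α * (β₁ + β₂) + β₁ * β₂ * (β₁ * β₂ * σ ^ 2 - 3))
          - α ^ 2 * (β₁ ^ 2 * σ ^ 2 + 1) * (β₂ ^ 2 * σ ^ 2 + 1) := by linarith
      exact mul_pos this hσ2
    obtain ⟨hq, hs, hp, hr⟩ := dirB hsum hqs huv hmn hE
    exact hstab_iff.mpr ⟨⟨hq, hp⟩, ⟨hs, hr⟩⟩
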